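/- Let f : (X, ζ_X, E) → (Y, ζ_Y, E) be a soft function between soft convex spaces. Then f is soft convex to convex (images of members of ζ_X lie in ζ_Y) if and only if co_Y(f(Ω)) ⊑ f(co_X(Ω)) for every soft set Ω on X. -/

import Mathlib

def IsSoftConvexStructure {X E : Type*} (ζ : Set (E → Set X)) : Prop :=
  (fun _ : E => (∅ : Set X)) ∈ ζ ∧
  (fun _ : E => (Set.univ : Set X)) ∈ ζ ∧
  (∀ S ⊆ ζ, (fun e => ⋂ Ω ∈ S, Ω e) ∈ ζ) ∧
  (∀ S ⊆ ζ, DirectedOn (· ≤ ·) S → (fun e => ⋃ Ω ∈ S, Ω e) ∈ ζ)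

def softHull {X E : Type*} (ζ : Set (E → Set X)) (Ω : E → Set X) : E → Set X :=
  fun e => ⋂ O ∈ {O | O ∈ ζ ∧ Ω ≤ O}, O e

lemma softHull_mem {X E : Type*} {ζ : Set (E → Set X)} (hζ : IsSoftConvexStructure ζ)
    (Ω : E → Set X) : softHull ζ Ω ∈ ζ := by
  have := hζ.2.2.1 {O | O ∈ ζ ∧ Ω ≤ O} (fun O hO => hO.1)
  exact this

lemma le_softHull {X E : Type*} (ζ : Set (E → Set X)) (Ω : E → Set X) :
    Ω ≤ softHull ζ Ω := by
  intro e x hx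
  exact Set.mem_iInter₂.2 fun O hO => hO.2 e hx

lemma softHull_le {X E : Type*} {ζ : Set (E → Set X)} {Ω O : E → Set X}
    (hO : O ∈ ζ) (hle : Ω ≤ O) : softHull ζ Ω ≤ O := by
  intro e x hx
  exact Set.mem_iInter₂.1 hx O ⟨hO, hle⟩

/-- f is soft convex to convex iff co_Y(f(Ω)) ⊑ f(co_X(Ω)) for every soft set Ω. -/
theorem scc_iff_hull_image {X Y E : Type*} (ζX : Set (E → Set X)) (ζY : Set (E → Set Y))
    (hζX : IsSoftConvexStructure ζX) (hζY : IsSoftConvexStructure ζY) (f : X → Y) :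
    (∀ Ω ∈ ζX, (fun e => f '' Ω e) ∈ ζY) ↔
    (∀ Ω : E → Set X,
      softHull ζY (fun e => f '' Ω e) ≤ (fun e => f '' softHull ζX Ω e)) := by
  constructor
  · intro h Ω
    apply softHull_le (h _ (softHull_mem hζX Ω))
    intro e
    exact Set.image_mono (f := f) (le_softHull ζX Ω e)
  · intro h Ω hΩ
    have h1 : (fun e => f '' Ω e) ≤ softHull ζY (fun e => f '' Ω e) :=
      le_softHull _ _
    have h2 : softHull ζX Ω ≤ Ω := softHull_le hΩ le_rfl
    have h3 : softHull ζY (fun e => f '' Ω e) = fun e => f '' Ω e := by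
      apply le_antisymm
      · intro e
        exact le_trans (h Ω e) (Set.image_mono (f := f) (h2 e))
      · exact h1
    rw [← h3]
    exact softHull_mem hζY _
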